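/- Let n ≥ 1, let w ∈ W have underlying permutation σ₀ and negated-index set B with |B| = k. Form the sequence s = (σ₀(1), …, σ₀(n)); let a₁, …, a_{n−k} be the subsequence of entries of s not lying in B, and let b₁, …, b_k be the subsequence of entries of s lying in B (both in the order they appear in s). Define the permutation η ∈ Sₙ by η(t) = a_t for 1 ≤ t ≤ n−k and η(n−k+t) = b_{k+1−t} for 1 ≤ t ≤ k (i.e. one-line notation: the entries of s outside B in order, followed by the entries of B in reverse order of appearance). Then Φ_w ∩ Φ⁺⁰ = Φ_η. -/

import Mathlib

open Pointwise

def stdBasis (n : ℕ) (i : Fin n) : Fin n → ℤ := Pi.single i 1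

def PhiPos (n : ℕ) : Set (Fin n → ℤ) :=
  {v | ∃ i j : Fin n, i < j ∧ v = stdBasis n i - stdBasis n j} ∪
  {v | ∃ i j : Fin n, i ≤ j ∧ v = stdBasis n i + stdBasis n j}

def IsSigned {n : ℕ} (w : (Fin n → ℤ) ≃ₗ[ℤ] (Fin n → ℤ)) : Prop :=
  ∀ j : Fin n, ∃ i : Fin n,
    w (stdBasis n j) = stdBasis n i ∨ w (stdBasis n j) = - stdBasis n i

def PhiW {n : ℕ} (w : (Fin n → ℤ) ≃ₗ[ℤ] (Fin n → ℤ)) : Set (Fin n → ℤ) :=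
  (⇑w '' (-(PhiPos n))) ∩ PhiPos n

def permL {n : ℕ} (σ : Equiv.Perm (Fin n)) : (Fin n → ℤ) ≃ₗ[ℤ] (Fin n → ℤ) where
  toFun v := fun i => v (σ.symm i)
  invFun v := fun i => v (σ i)
  map_add' _ _ := rfl
  map_smul' _ _ := rfl
  left_inv v := by funext i; simp
  right_inv v := by funext i; simp

def Phi0 (n : ℕ) : Set (Fin n → ℤ) :=
  {v | ∃ i j : Fin n, i < j ∧ v = stdBasis n i - stdBasis n j}

/-! ### Vector-level lemmas -/

lemma tot_e {n : ℕ} (i : Fin n) : ∑ j, stdBasis n i j = 1 := by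
  simp [stdBasis]

lemma sub_ne_add {n : ℕ} {p q a b : Fin n} :
    stdBasis n p - stdBasis n q ≠ stdBasis n a + stdBasis n b := by
  intro h
  have := congrArg (fun v => ∑ j, v j) h
  simp [Finset.sum_sub_distrib, Finset.sum_add_distrib, tot_e] at this

lemma neg_sum_ne_sub {n : ℕ} {p q a b : Fin n} :
    -stdBasis n p - stdBasis n q ≠ stdBasis n a - stdBasis n b := by
  intro h
  have := congrArg (fun v => ∑ j, v j) h
  simp [Finset.sum_sub_distrib, tot_e] at this

lemma neg_sum_ne_add {n : ℕ} {p q a b : Fin n} :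
    -stdBasis n p - stdBasis n q ≠ stdBasis n a + stdBasis n b := by
  intro h
  have := congrArg (fun v => ∑ j, v j) h
  simp [Finset.sum_sub_distrib, Finset.sum_add_distrib, tot_e] at this

lemma e_apply {n : ℕ} (i j : Fin n) : stdBasis n i j = if j = i then 1 else 0 := by
  simp [stdBasis, Pi.single_apply]

lemma sub_eq_sub_iff {n : ℕ} {p q a b : Fin n} (hpq : p ≠ q) (hab : a ≠ b) :
    stdBasis n p - stdBasis n q = stdBasis n a - stdBasis n b ↔ p = a ∧ q = b := by
  constructor
  · intro h
    have h1 := congrFun h p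
    have h2 := congrFun h q
    simp only [Pi.sub_apply, e_apply] at h1 h2
    split_ifs at h1 h2 <;> simp_all
  · rintro ⟨rfl, rfl⟩; rfl

lemma mem_sub_iff {n : ℕ} {p q : Fin n} (hpq : p ≠ q) :
    stdBasis n p - stdBasis n q ∈ PhiPos n ↔ p < q := by
  constructor
  · rintro (⟨a, b, hab, h⟩ | ⟨a, b, hab, h⟩)
    · obtain ⟨rfl, rfl⟩ := (sub_eq_sub_iff hpq hab.ne).1 h
      exact hab
    · exact absurd h sub_ne_add
  · intro h
    exact Or.inl ⟨p, q, h, rfl⟩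

lemma mem_add {n : ℕ} (p q : Fin n) : stdBasis n p + stdBasis n q ∈ PhiPos n := by
  rcases le_total p q with h | h
  · exact Or.inr ⟨p, q, h, rfl⟩
  · exact Or.inr ⟨q, p, h, (add_comm _ _)⟩

lemma not_mem_negsum {n : ℕ} (p q : Fin n) :
    -stdBasis n p - stdBasis n q ∉ PhiPos n := by
  rintro (⟨a, b, hab, h⟩ | ⟨a, b, hab, h⟩)
  · exact neg_sum_ne_sub h
  · exact neg_sum_ne_add h

/-! ### `PhiW` membership lemmas -/

section PhiWLemmas
variable {n : ℕ}

lemma mem_image_lequiv (w : (Fin n → ℤ) ≃ₗ[ℤ] (Fin n → ℤ)) (S : Set (Fin n → ℤ))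
    (v : Fin n → ℤ) : v ∈ ⇑w '' S ↔ w.symm v ∈ S := by
  constructor
  · rintro ⟨x, hx, rfl⟩; simpa using hx
  · intro h; exact ⟨w.symm v, h, by simp⟩

lemma mem_neg_PhiPos (v : Fin n → ℤ) : v ∈ -(PhiPos n) ↔ -v ∈ PhiPos n := Set.mem_neg

lemma permL_e (η : Equiv.Perm (Fin n)) (j : Fin n) :
    permL η (stdBasis n j) = stdBasis n (η j) := by
  funext i
  simp only [permL, LinearEquiv.coe_mk, LinearMap.coe_mk, AddHom.coe_mk, stdBasis, Pi.single_apply]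
  by_cases h : i = η j
  · simp [h]
  · rw [if_neg h, if_neg (fun hc => h (by rw [← hc, Equiv.apply_symm_apply]))]

lemma permL_symm_e (η : Equiv.Perm (Fin n)) (i : Fin n) :
    (permL η).symm (stdBasis n i) = stdBasis n (η.symm i) := by
  apply (permL η).injective
  rw [LinearEquiv.apply_symm_apply, permL_e, Equiv.apply_symm_apply]

lemma wsymm_e (w : (Fin n → ℤ) ≃ₗ[ℤ] (Fin n → ℤ)) (σ₀ : Equiv.Perm (Fin n))
    (B : Finset (Fin n))
    (hw : ∀ j : Fin n, w (stdBasis n j) =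
      if σ₀ j ∈ B then - stdBasis n (σ₀ j) else stdBasis n (σ₀ j)) (i : Fin n) :
    w.symm (stdBasis n i) =
      if i ∈ B then - stdBasis n (σ₀.symm i) else stdBasis n (σ₀.symm i) := by
  have h := hw (σ₀.symm i)
  rw [Equiv.apply_symm_apply] at h
  by_cases hi : i ∈ B <;> simp only [hi, if_true, if_false] at h ⊢
  · rw [LinearEquiv.symm_apply_eq, map_neg, h, neg_neg]
  · rw [LinearEquiv.symm_apply_eq, h]

lemma mem_PhiW_perm (η : Equiv.Perm (Fin n)) (v : Fin n → ℤ) :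
    v ∈ PhiW (permL η) ↔
      ∃ i j : Fin n, i < j ∧ η.symm j < η.symm i ∧ v = stdBasis n i - stdBasis n j := by
  constructor
  · rintro ⟨him, hpos⟩
    rw [mem_image_lequiv, mem_neg_PhiPos] at him
    rcases hpos with ⟨i, j, hij, rfl⟩ | ⟨i, j, hij, rfl⟩
    · rw [map_sub, permL_symm_e, permL_symm_e, neg_sub] at him
      have hne : η.symm j ≠ η.symm i := fun h => hij.ne' (η.symm.injective h)
      exact ⟨i, j, hij, (mem_sub_iff hne).mp him, rfl⟩
    · rw [map_add, permL_symm_e, permL_symm_e, neg_add'] at him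
      exact absurd him (not_mem_negsum _ _)
  · rintro ⟨i, j, hij, hinv, rfl⟩
    refine ⟨?_, Or.inl ⟨i, j, hij, rfl⟩⟩
    rw [mem_image_lequiv, mem_neg_PhiPos, map_sub, permL_symm_e, permL_symm_e, neg_sub]
    exact (mem_sub_iff hinv.ne).mpr hinv

lemma mem_PhiW_w (w : (Fin n → ℤ) ≃ₗ[ℤ] (Fin n → ℤ)) (σ₀ : Equiv.Perm (Fin n))
    (B : Finset (Fin n))
    (hw : ∀ j : Fin n, w (stdBasis n j) =
      if σ₀ j ∈ B then - stdBasis n (σ₀ j) else stdBasis n (σ₀ j))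
    (i j : Fin n) (hij : i < j) :
    stdBasis n i - stdBasis n j ∈ PhiW w ↔
      ((i ∈ B ∧ j ∈ B ∧ σ₀.symm i < σ₀.symm j) ∨
       (i ∉ B ∧ j ∉ B ∧ σ₀.symm j < σ₀.symm i) ∨
       (i ∈ B ∧ j ∉ B)) := by
  have hpq : σ₀.symm i ≠ σ₀.symm j := fun h => hij.ne (σ₀.symm.injective h)
  have hmem : stdBasis n i - stdBasis n j ∈ PhiPos n := Or.inl ⟨i, j, hij, rfl⟩
  have hws := wsymm_e w σ₀ B hw
  rw [PhiW, Set.mem_inter_iff, and_iff_left hmem, mem_image_lequiv, mem_neg_PhiPos]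
  by_cases hi : i ∈ B <;> by_cases hj : j ∈ B
  · have hv : -(w.symm (stdBasis n i - stdBasis n j)) =
        stdBasis n (σ₀.symm i) - stdBasis n (σ₀.symm j) := by
      rw [map_sub, hws i, hws j, if_pos hi, if_pos hj]; ring
    rw [hv, mem_sub_iff hpq]
    simp [hi, hj]
  · have hv : -(w.symm (stdBasis n i - stdBasis n j)) =
        stdBasis n (σ₀.symm i) + stdBasis n (σ₀.symm j) := by
      rw [map_sub, hws i, hws j, if_pos hi, if_neg hj]; ring
    rw [hv]
    simp [hi, hj, mem_add]
  · have hv : -(w.symm (stdBasis n i - stdBasis n j)) =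
        -stdBasis n (σ₀.symm i) - stdBasis n (σ₀.symm j) := by
      rw [map_sub, hws i, hws j, if_neg hi, if_pos hj]; ring
    rw [hv]
    simp [hi, hj, not_mem_negsum]
  · have hv : -(w.symm (stdBasis n i - stdBasis n j)) =
        stdBasis n (σ₀.symm j) - stdBasis n (σ₀.symm i) := by
      rw [map_sub, hws i, hws j, if_neg hi, if_neg hj]; ring
    rw [hv, mem_sub_iff (Ne.symm hpq)]
    simp [hi, hj]

end PhiWLemmas

/-! ### Combinatorial lemmas about the list `L` -/

def Ml (n : ℕ) (σ₀ : Equiv.Perm (Fin n)) : List (Fin n) := (List.finRange n).map σ₀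
def Fl (n : ℕ) (σ₀ : Equiv.Perm (Fin n)) (B : Finset (Fin n)) : List (Fin n) :=
  (Ml n σ₀).filter (fun x => x ∉ B)
def Gl (n : ℕ) (σ₀ : Equiv.Perm (Fin n)) (B : Finset (Fin n)) : List (Fin n) :=
  (Ml n σ₀).filter (fun x => x ∈ B)

section Comb
variable {n : ℕ} (σ₀ : Equiv.Perm (Fin n)) (B : Finset (Fin n))
  (L : List (Fin n))
  (hL : L = ((List.finRange n).map σ₀).filter (fun x => x ∉ B) ++
            (((List.finRange n).map σ₀).filter (fun x => x ∈ B)).reverse)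
  (hlen : L.length = n)
  (η : Equiv.Perm (Fin n))
  (hη : ∀ t : Fin n, η t = L.get (Fin.cast hlen.symm t))

lemma sub_mono (l : List (Fin n)) (hsub : List.Sublist l (Ml n σ₀)) (s t : ℕ)
    (hs : s < l.length) (ht : t < l.length) :
    σ₀.symm (l[s]) < σ₀.symm (l[t]) ↔ s < t := by
  obtain ⟨f, hf⟩ := List.sublist_iff_exists_fin_orderEmbedding_get_eq.mp hsub
  have key : ∀ u : Fin l.length, ((σ₀.symm (l.get u) : Fin n) : ℕ) = ((f u : Fin _) : ℕ) := by
    intro u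
    rw [hf u]
    have hmg : (Ml n σ₀).get (f u) = σ₀ ⟨((f u) : ℕ), by simpa [Ml] using (f u).isLt⟩ := by
      simp [Ml]
    rw [hmg, Equiv.symm_apply_apply]
  have h1 : l[s] = l.get ⟨s, hs⟩ := rfl
  have h2 : l[t] = l.get ⟨t, ht⟩ := rfl
  rw [h1, h2, Fin.lt_def, key ⟨s, hs⟩, key ⟨t, ht⟩, ← Fin.lt_def, f.lt_iff_lt, Fin.lt_def]

include hL hlen

lemma len_split : (Fl n σ₀ B).length + (Gl n σ₀ B).length = n := by
  subst hL; simpa [Fl, Gl, Ml] using hlen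

include hη

lemma eta_low (t : Fin n) (ht : (t : ℕ) < (Fl n σ₀ B).length) :
    η t = (Fl n σ₀ B)[(t : ℕ)] := by
  have h : η t = L[(t : ℕ)]'(by omega) := hη t
  subst hL
  rw [h]
  exact List.getElem_append_left ht

lemma eta_high (t : Fin n) (ht : (Fl n σ₀ B).length ≤ (t : ℕ)) :
    η t = (Gl n σ₀ B)[(Gl n σ₀ B).length - 1 - ((t : ℕ) - (Fl n σ₀ B).length)]'(by
      have := len_split σ₀ B L hL hlen; have := t.isLt; omega) := by
  have hls := len_split σ₀ B L hL hlen
  have h : η t = (Fl n σ₀ B ++ (Gl n σ₀ B).reverse)[(t : ℕ)]'(by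
      simp only [List.length_append, List.length_reverse]; omega) := by
    subst hL; exact hη t
  rw [h, List.getElem_append_right ht, List.getElem_reverse]

lemma mem_B_iff (x : Fin n) : x ∈ B ↔ (Fl n σ₀ B).length ≤ ((η.symm x : Fin n) : ℕ) := by
  set t := η.symm x with hts
  have hx : η t = x := Equiv.apply_symm_apply _ _
  rcases lt_or_ge ((t : Fin n) : ℕ) ((Fl n σ₀ B).length) with h | h
  · have h2 := eta_low σ₀ B L hL hlen η hη t h
    rw [hx] at h2
    have hmem : x ∈ (Fl n σ₀ B) := h2 ▸ List.getElem_mem _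
    simp only [Fl, List.mem_filter, decide_eq_true_eq] at hmem
    constructor
    · intro hb; exact absurd hb hmem.2
    · intro hge; omega
  · have h2 := eta_high σ₀ B L hL hlen η hη t h
    rw [hx] at h2
    have hmem : x ∈ (Gl n σ₀ B) := h2 ▸ List.getElem_mem _
    simp only [Gl, List.mem_filter, decide_eq_true_eq] at hmem
    exact ⟨fun _ => h, fun _ => hmem.2⟩

lemma order_low (x y : Fin n) (hx : x ∉ B) (hy : y ∉ B) :
    σ₀.symm x < σ₀.symm y ↔ η.symm x < η.symm y := by
  have hxl : ((η.symm x : Fin n) : ℕ) < (Fl n σ₀ B).length :=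
    lt_of_not_ge (fun h => hx ((mem_B_iff σ₀ B L hL hlen η hη x).mpr h))
  have hyl : ((η.symm y : Fin n) : ℕ) < (Fl n σ₀ B).length :=
    lt_of_not_ge (fun h => hy ((mem_B_iff σ₀ B L hL hlen η hη y).mpr h))
  have hxe : x = (Fl n σ₀ B)[((η.symm x : Fin n) : ℕ)] := by
    have := eta_low σ₀ B L hL hlen η hη (η.symm x) hxl
    rw [Equiv.apply_symm_apply] at this; exact this
  have hye : y = (Fl n σ₀ B)[((η.symm y : Fin n) : ℕ)] := by
    have := eta_low σ₀ B L hL hlen η hη (η.symm y) hyl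
    rw [Equiv.apply_symm_apply] at this; exact this
  rw [Fin.lt_def (b := η.symm y)]
  conv_lhs => rw [hxe, hye]
  exact sub_mono σ₀ (Fl n σ₀ B) List.filter_sublist _ _ hxl hyl

lemma order_high (x y : Fin n) (hx : x ∈ B) (hy : y ∈ B) (hxy : x ≠ y) :
    σ₀.symm x < σ₀.symm y ↔ η.symm y < η.symm x := by
  have hls := len_split σ₀ B L hL hlen
  set m := (Fl n σ₀ B).length
  set K := (Gl n σ₀ B).length
  have hxg : m ≤ ((η.symm x : Fin n) : ℕ) := (mem_B_iff σ₀ B L hL hlen η hη x).mp hx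
  have hyg : m ≤ ((η.symm y : Fin n) : ℕ) := (mem_B_iff σ₀ B L hL hlen η hη y).mp hy
  have hxn : ((η.symm x : Fin n) : ℕ) < n := (η.symm x).isLt
  have hyn : ((η.symm y : Fin n) : ℕ) < n := (η.symm y).isLt
  have hne : ((η.symm x : Fin n) : ℕ) ≠ ((η.symm y : Fin n) : ℕ) := by
    intro h; exact hxy (by
      have h2 : η.symm x = η.symm y := Fin.ext h
      have := congrArg η h2; simpa using this)
  have hxe : x = (Gl n σ₀ B)[K - 1 - (((η.symm x : Fin n) : ℕ) - m)]'(by omega) := by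
    have := eta_high σ₀ B L hL hlen η hη (η.symm x) hxg
    rw [Equiv.apply_symm_apply] at this; exact this
  have hye : y = (Gl n σ₀ B)[K - 1 - (((η.symm y : Fin n) : ℕ) - m)]'(by omega) := by
    have := eta_high σ₀ B L hL hlen η hη (η.symm y) hyg
    rw [Equiv.apply_symm_apply] at this; exact this
  rw [Fin.lt_def (b := η.symm x)]
  conv_lhs => rw [hxe, hye]
  rw [sub_mono σ₀ (Gl n σ₀ B) List.filter_sublist _ _ (by omega) (by omega)]
  omega

lemma key_iff (i j : Fin n) (hij : i ≠ j) :
    ((i ∈ B ∧ j ∈ B ∧ σ₀.symm i < σ₀.symm j) ∨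
     (i ∉ B ∧ j ∉ B ∧ σ₀.symm j < σ₀.symm i) ∨
     (i ∈ B ∧ j ∉ B)) ↔ η.symm j < η.symm i := by
  by_cases hi : i ∈ B <;> by_cases hj : j ∈ B
  · rw [order_high σ₀ B L hL hlen η hη i j hi hj hij]
    simp [hi, hj]
  · have h1 : (Fl n σ₀ B).length ≤ ((η.symm i : Fin n) : ℕ) :=
      (mem_B_iff σ₀ B L hL hlen η hη i).mp hi
    have h2 : ((η.symm j : Fin n) : ℕ) < (Fl n σ₀ B).length :=
      lt_of_not_ge (fun h => hj ((mem_B_iff σ₀ B L hL hlen η hη j).mpr h))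
    simp only [hi, hj]
    constructor
    · intro _; rw [Fin.lt_def]; omega
    · intro _; tauto
  · have h1 : (Fl n σ₀ B).length ≤ ((η.symm j : Fin n) : ℕ) :=
      (mem_B_iff σ₀ B L hL hlen η hη j).mp hj
    have h2 : ((η.symm i : Fin n) : ℕ) < (Fl n σ₀ B).length :=
      lt_of_not_ge (fun h => hi ((mem_B_iff σ₀ B L hL hlen η hη i).mpr h))
    simp only [hi, hj]
    constructor
    · intro h; tauto
    · intro h; rw [Fin.lt_def] at h; omega
  · rw [order_low σ₀ B L hL hlen η hη j i hj hi]
    simp [hi, hj]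

end Comb

theorem stmt6 (n : ℕ) (hn : 1 ≤ n) (w : (Fin n → ℤ) ≃ₗ[ℤ] (Fin n → ℤ))
    (σ₀ : Equiv.Perm (Fin n)) (B : Finset (Fin n))
    (hw : ∀ j : Fin n, w (stdBasis n j) =
      if σ₀ j ∈ B then - stdBasis n (σ₀ j) else stdBasis n (σ₀ j))
    -- the one-line list of `η`: the entries of `s = (σ₀(1), …, σ₀(n))` not in `B`, in order,
    -- followed by the entries of `s` lying in `B`, in reverse order of appearance
    (L : List (Fin n))
    (hL : L = ((List.finRange n).map σ₀).filter (fun x => x ∉ B) ++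
              (((List.finRange n).map σ₀).filter (fun x => x ∈ B)).reverse)
    (hlen : L.length = n)
    (η : Equiv.Perm (Fin n))
    (hη : ∀ t : Fin n, η t = L.get (Fin.cast hlen.symm t)) :
    PhiW w ∩ Phi0 n = PhiW (permL η) := by
  ext v
  constructor
  · rintro ⟨hvW, i, j, hij, rfl⟩
    have hC := (mem_PhiW_w w σ₀ B hw i j hij).mp hvW
    rw [key_iff σ₀ B L hL hlen η hη i j hij.ne] at hC
    exact (mem_PhiW_perm η _).mpr ⟨i, j, hij, hC, rfl⟩
  · intro hv
    obtain ⟨i, j, hij, hinv, rfl⟩ := (mem_PhiW_perm η v).mp hv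
    refine ⟨?_, ⟨i, j, hij, rfl⟩⟩
    rw [mem_PhiW_w w σ₀ B hw i j hij, key_iff σ₀ B L hL hlen η hη i j hij.ne]
    exact hinv
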